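/- Let A be compact, convex, with differentiable boundary and 0 ∈ int(A), and V ≠ {0} a linear subspace. Define η_A(x_V, x_{V⊥}) = μ_A(x_V + x_{V⊥}) for x_V ∈ V, x_{V⊥} ∈ V^⊥. Then p_V(A) = { x_V ∈ V : ∃ x_{V⊥} ∈ V^⊥, η_A(x_V, x_{V⊥}) ≤ 1 and (x_V + x_{V⊥} ≠ 0 → the partial derivative of η_A with respect to x_{V⊥} vanishes at (x_V, x_{V⊥})) }. -/

import Mathlib

open scoped RealInnerProductSpace

theorem projection_characterization
    {E : Type*} [NormedAddCommGroup E] [InnerProductSpace ℝ E] [FiniteDimensional ℝ E]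
    (A : Set E) (hcpt : IsCompact A) (hconv : Convex ℝ A)
    (h0 : (0 : E) ∈ interior A)
    (hC1 : ContDiffOn ℝ 1 (gauge A) {0}ᶜ)
    (V : Submodule ℝ E) (hV : V ≠ ⊥) :
    (V.orthogonalProjection) '' A =
      {xV : V | ∃ xp ∈ Vᗮ, gauge A ((xV : E) + xp) ≤ 1 ∧
        ((xV : E) + xp ≠ 0 →
          ∀ v ∈ Vᗮ, ⟪gradient (gauge A) ((xV : E) + xp), v⟫ = 0)} := by
  have hA0 : (0 : E) ∈ A := interior_subset h0
  have hnhds : A ∈ nhds (0 : E) := mem_interior_iff_mem_nhds.1 h0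
  have hmem : ∀ x : E, gauge A x ≤ 1 ↔ x ∈ A := fun x => by
    rw [gauge_le_one_iff_mem_closure hconv hnhds, hcpt.isClosed.closure_eq]
  have hcont : Continuous (gauge A) := continuous_gauge hconv hnhds
  ext xV
  simp only [Set.mem_image, Set.mem_setOf_eq]
  constructor
  · rintro ⟨a, ha, rfl⟩
    set w : E := (V.orthogonalProjection a : E) with hwdef
    by_cases hw0 : w = 0
    · refine ⟨0, Vᗮ.zero_mem, ?_, ?_⟩
      · simp [← hwdef, hw0]
      · simp [← hwdef, hw0]
    · -- minimize gauge over the fiber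
      set S : Set E := {t | t ∈ (Vᗮ : Set E) ∧ w + t ∈ A} with hSdef
      have hScpt : IsCompact S := by
        have hSeq : S = ((fun x : E => -w + x) '' A) ∩ (Vᗮ : Set E) := by
          ext t
          simp only [hSdef, Set.mem_setOf_eq, Set.mem_inter_iff, Set.mem_image, SetLike.mem_coe]
          constructor
          · rintro ⟨h1, h2⟩; exact ⟨⟨w + t, h2, by abel⟩, h1⟩
          · rintro ⟨⟨b, hb, rfl⟩, h1⟩; exact ⟨h1, by simpa [add_comm, ← add_assoc] using hb⟩
        rw [hSeq]
        exact (hcpt.image (continuous_const.add continuous_id)).inter_right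
          (Submodule.closed_of_finiteDimensional _)
      have hSne : S.Nonempty := by
        refine ⟨a - w, Submodule.sub_starProjection_mem_orthogonal a, ?_⟩
        simpa using ha
      obtain ⟨t₀, ht₀, hmin⟩ := hScpt.exists_isMinOn hSne
        ((hcont.comp (continuous_const.add continuous_id)).continuousOn)
      have ht₀V : t₀ ∈ Vᗮ := ht₀.1
      have hle1 : gauge A (w + t₀) ≤ 1 := gauge_le_one_of_mem ht₀.2
      have hglob : ∀ t ∈ Vᗮ, gauge A (w + t₀) ≤ gauge A (w + t) := by
        intro t ht
        by_cases htA : w + t ∈ A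
        · exact hmin ⟨ht, htA⟩
        · have : 1 < gauge A (w + t) := lt_of_not_ge fun h => htA ((hmem _).1 h)
          linarith
      have hne : w + t₀ ≠ 0 := by
        intro h
        apply hw0
        have hwV : w ∈ V := (V.orthogonalProjection a).2
        have hperp : ⟪w, t₀⟫ = 0 := ht₀V w hwV
        have : ⟪w, w⟫ = 0 := by
          have := congrArg (fun x => ⟪w, x⟫) h
          simpa [inner_add_right, hperp] using this
        exact inner_self_eq_zero.1 this
      have hdiff : DifferentiableAt ℝ (gauge A) (w + t₀) :=
        (hC1.differentiableOn one_ne_zero).differentiableAt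
          (isOpen_compl_singleton.mem_nhds (by simpa using hne))
      refine ⟨t₀, ht₀V, hle1, fun _ v hv => ?_⟩
      have hcurve : HasDerivAt (fun s : ℝ => w + t₀ + s • v) v 0 := by
        simpa using (((hasDerivAt_id (0 : ℝ)).smul_const v).const_add (w + t₀))
      have hline : HasDerivAt (fun s : ℝ => gauge A (w + t₀ + s • v))
          (fderiv ℝ (gauge A) (w + t₀) v) 0 := by
        have h0' : HasFDerivAt (gauge A) (fderiv ℝ (gauge A) (w + t₀)) (w + t₀ + (0:ℝ) • v) := by
          simpa using hdiff.hasFDerivAt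
        have := h0'.comp_hasDerivAt 0 hcurve
        exact this
      have hlm : IsLocalMin (fun s : ℝ => gauge A (w + t₀ + s • v)) 0 := by
        apply Filter.Eventually.of_forall
        intro s
        have hmem' : t₀ + s • v ∈ Vᗮ := Vᗮ.add_mem ht₀V (Vᗮ.smul_mem s hv)
        simpa [add_assoc] using hglob (t₀ + s • v) hmem'
      have hz : fderiv ℝ (gauge A) (w + t₀) v = 0 := hlm.hasDerivAt_eq_zero hline
      rw [gradient]
      rw [InnerProductSpace.toDual_symm_apply]
      exact hz
  · rintro ⟨xp, hxp, hle, _⟩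
    refine ⟨(xV : E) + xp, (hmem _).1 hle, ?_⟩
    rw [map_add, Submodule.orthogonalProjection_mem_subspace_eq_self,
      Submodule.orthogonalProjectionOnto_apply_of_mem_orthogonal hxp, add_zero]
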